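/- Let Γ be a finite core A-graph of rank k (where A = {a_1,…,a_k}). If Γ can be transformed by a single fold into the A-graph consisting of R_A with a spike-edge attached, then there exists a freely reduced word of length 4 in F(A) that is not the label of any reduced edge-path in Γ. -/

import Mathlib

/-!
STATEMENT 15: if a finite core A-graph Γ of rank k is transformed by a
single fold into (a graph isomorphic to) the rose R_A with a spike-edge
attached, then some freely reduced word of length 4 in F(A) is not
readable in Γ.
-/

/-- A finite `A`-graph for `A = {a₁,…,a_k}`: a finite directed graph with
edges labeled by elements of `Fin k`. -/
structure AGraph (k : ℕ) : Type 1 where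
  V : Type
  E : Type
  finV : Finite V
  finE : Finite E
  o : E → V
  t : E → V
  lab : E → Fin k

namespace AGraph

variable {k : ℕ}

/-- The rose `R_A`: one vertex and `k` loop edges labeled `a₁,…,a_k`. -/
def RA (k : ℕ) : AGraph k where
  V := Unit
  E := Fin k
  finV := inferInstance
  finE := inferInstance
  o := fun _ => ()
  t := fun _ => ()
  lab := id

/-- A label-preserving morphism of `A`-graphs. -/
structure Hom (Γ Δ : AGraph k) where
  onV : Γ.V → Δ.V
  onE : Γ.E → Δ.E
  map_o : ∀ e, Δ.o (onE e) = onV (Γ.o e)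
  map_t : ∀ e, Δ.t (onE e) = onV (Γ.t e)
  map_lab : ∀ e, Δ.lab (onE e) = Γ.lab e

/-- Isomorphism of `A`-graphs. -/
def Iso (Γ Δ : AGraph k) : Prop :=
  ∃ φ : Hom Γ Δ, Function.Bijective φ.onV ∧ Function.Bijective φ.onE

/-- `Δ` is obtained from `Γ` by a single Stallings fold: two distinct edges
with the same label and the same initial (or the same terminal) vertex are
identified, together with their terminal (resp. initial) vertices, and
nothing else is identified. -/
def IsFold (Γ Δ : AGraph k) : Prop :=
  ∃ φ : Hom Γ Δ, ∃ e₁ e₂ : Γ.E, e₁ ≠ e₂ ∧ Γ.lab e₁ = Γ.lab e₂ ∧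
    Function.Surjective φ.onV ∧ Function.Surjective φ.onE ∧
    φ.onE e₁ = φ.onE e₂ ∧
    (∀ f f', φ.onE f = φ.onE f' →
      f = f' ∨ (f = e₁ ∧ f' = e₂) ∨ (f = e₂ ∧ f' = e₁)) ∧
    ((Γ.o e₁ = Γ.o e₂ ∧
        ∀ v v', φ.onV v = φ.onV v' →
          v = v' ∨ (v = Γ.t e₁ ∧ v' = Γ.t e₂) ∨ (v = Γ.t e₂ ∧ v' = Γ.t e₁)) ∨
     (Γ.t e₁ = Γ.t e₂ ∧
        ∀ v v', φ.onV v = φ.onV v' →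
          v = v' ∨ (v = Γ.o e₁ ∧ v' = Γ.o e₂) ∨ (v = Γ.o e₂ ∧ v' = Γ.o e₁)))

/-- The initial vertex of a step of a walk (an edge together with the
direction in which it is traversed). -/
def stepStart (Γ : AGraph k) (s : Γ.E × Bool) : Γ.V :=
  if s.2 then Γ.o s.1 else Γ.t s.1

/-- The terminal vertex of a step of a walk. -/
def stepEnd (Γ : AGraph k) (s : Γ.E × Bool) : Γ.V :=
  if s.2 then Γ.t s.1 else Γ.o s.1

/-- A walk (edge-path) in `Γ`: consecutive steps match up. -/
def IsWalk (Γ : AGraph k) (l : List (Γ.E × Bool)) : Prop :=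
  l.Chain' fun s s' => Γ.stepEnd s = Γ.stepStart s'

/-- The label of a walk, as a word in the letters `a_i^{±1}`. -/
def walkLabel (Γ : AGraph k) (l : List (Γ.E × Bool)) : List (Fin k × Bool) :=
  l.map fun s => (Γ.lab s.1, s.2)

/-- A walk from `v` to `w` (the empty walk only when `v = w`). -/
def IsWalkFromTo (Γ : AGraph k) (v w : Γ.V) (l : List (Γ.E × Bool)) : Prop :=
  Γ.IsWalk l ∧ (∀ s ∈ l.head?, Γ.stepStart s = v) ∧
    (∀ s ∈ l.getLast?, Γ.stepEnd s = w) ∧ (l = [] → v = w)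

/-- A word is readable in `Γ` if it is the label of some edge-path in `Γ`. -/
def Readable (Γ : AGraph k) (w : List (Fin k × Bool)) : Prop :=
  ∃ l : List (Γ.E × Bool), Γ.IsWalk l ∧ Γ.walkLabel l = w

/-- `Γ` is connected. -/
def Connected (Γ : AGraph k) : Prop :=
  ∀ v w : Γ.V, ∃ l, Γ.IsWalkFromTo v w l

/-- The degree of a vertex (a loop at `v` contributes 2). -/
noncomputable def degree (Γ : AGraph k) (v : Γ.V) : ℕ :=
  Nat.card {e : Γ.E // Γ.o e = v} + Nat.card {e : Γ.E // Γ.t e = v}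

/-- A core graph: finite, connected, and with no vertices of degree one. -/
def IsCore (Γ : AGraph k) : Prop :=
  Γ.Connected ∧ ∀ v : Γ.V, Γ.degree v ≠ 1

/-- `Γ` (assumed connected) has rank `r`, i.e. first Betti number
`|E| - |V| + 1 = r`. -/
def HasRank (Γ : AGraph k) (r : ℕ) : Prop :=
  Nat.card Γ.E + 1 = Nat.card Γ.V + r

/-- `Γ` folds onto `R_A`: a finite sequence of folds transforms `Γ` into a
graph isomorphic to `R_A`. -/
def FoldsOntoRA (Γ : AGraph k) : Prop :=
  ∃ n : ℕ, ∃ seq : Fin (n + 1) → AGraph k, seq 0 = Γ ∧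
    Iso (seq (Fin.last n)) (RA k) ∧
    ∀ i : Fin n, IsFold (seq i.castSucc) (seq i.succ)

end AGraph

/-- The rose `R_A` with a spike-edge (labeled `a`) attached: one extra vertex
joined to the vertex of the rose by one extra edge. -/
def AGraph.RAspike (k : ℕ) (a : Fin k) : AGraph k where
  V := Bool
  E := Fin k ⊕ Unit
  finV := inferInstance
  finE := inferInstance
  o := Sum.elim (fun _ => false) (fun _ => false)
  t := Sum.elim (fun _ => false) (fun _ => true)
  lab := Sum.elim id (fun _ => a)

section Aux

open AGraph

variable {k : ℕ}

private lemma aux_exists_edge_at (Γ : AGraph k) (hconn : Γ.Connected) {w w' : Γ.V}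
    (hne : w ≠ w') : ∃ e, Γ.o e = w ∨ Γ.t e = w := by
  obtain ⟨l, -, hhead, -, hnil⟩ := hconn w w'
  cases l with
  | nil => exact absurd (hnil rfl) hne
  | cons s tl =>
    have hs : Γ.stepStart s = w := hhead s (by simp)
    obtain ⟨e, b⟩ := s
    cases b <;> simp [AGraph.stepStart] at hs
    · exact ⟨e, Or.inr hs⟩
    · exact ⟨e, Or.inl hs⟩

private lemma aux_degree_one_t (Γ : AGraph k) (w : Γ.V) (x : Γ.E)
    (ho : ∀ e, Γ.o e ≠ w) (hx : Γ.t x = w) (huniq : ∀ e, Γ.t e = w → e = x) :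
    Γ.degree w = 1 := by
  haveI := Γ.finE
  haveI : IsEmpty {e : Γ.E // Γ.o e = w} := ⟨fun ⟨e, he⟩ => ho e he⟩
  haveI : Nonempty {e : Γ.E // Γ.t e = w} := ⟨⟨x, hx⟩⟩
  haveI : Subsingleton {e : Γ.E // Γ.t e = w} :=
    ⟨fun y z => Subtype.ext ((huniq y.1 y.2).trans (huniq z.1 z.2).symm)⟩
  simp [AGraph.degree, Nat.card_unique]

private lemma aux_degree_one_o (Γ : AGraph k) (w : Γ.V) (x : Γ.E)
    (ht : ∀ e, Γ.t e ≠ w) (hx : Γ.o x = w) (huniq : ∀ e, Γ.o e = w → e = x) :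
    Γ.degree w = 1 := by
  haveI := Γ.finE
  haveI : IsEmpty {e : Γ.E // Γ.t e = w} := ⟨fun ⟨e, he⟩ => ht e he⟩
  haveI : Nonempty {e : Γ.E // Γ.o e = w} := ⟨⟨x, hx⟩⟩
  haveI : Subsingleton {e : Γ.E // Γ.o e = w} :=
    ⟨fun y z => Subtype.ext ((huniq y.1 y.2).trans (huniq z.1 z.2).symm)⟩
  simp [AGraph.degree, Nat.card_unique]

/-- Case I: the extra `a`-edge is not a loop; then `aaaa` is unreadable. -/
private lemma aux_lemA (Γ : AGraph k) (a : Fin k) (v : Γ.V) (fa : Γ.E)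
    (hstart : ∀ e, Γ.lab e = a → Γ.o e ≠ v)
    (hend : ∀ e, Γ.lab e = a → e ≠ fa → Γ.t e = v)
    (hcross : Γ.o fa ≠ Γ.t fa) :
    ¬ Γ.Readable [(a, true), (a, true), (a, true), (a, true)] := by
  rintro ⟨l, hwalk, hlabel⟩
  rcases l with _ | ⟨s1, _ | ⟨s2, _ | ⟨s3, _ | ⟨s4, _ | ⟨s5, l⟩⟩⟩⟩⟩ <;>
    simp [AGraph.walkLabel, Prod.ext_iff] at hlabel
  obtain ⟨⟨h1l, h1b⟩, ⟨h2l, h2b⟩, ⟨h3l, h3b⟩, h4l, h4b⟩ := hlabel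
  simp [AGraph.IsWalk, List.Chain', List.isChain_cons_cons, AGraph.stepEnd, AGraph.stepStart, h1b, h2b, h3b, h4b] at hwalk
  obtain ⟨h12, h23, h34⟩ := hwalk
  by_cases hs1 : s1.1 = fa
  · by_cases hs2 : s2.1 = fa
    · rw [hs1, hs2] at h12; exact hcross h12.symm
    · have := hend s2.1 h2l hs2
      rw [this] at h23
      exact hstart s3.1 h3l h23.symm
  · have := hend s1.1 h1l hs1
    rw [this] at h12
    exact hstart s2.1 h2l h12.symm

/-- Case II: the extra `a`-edge is a loop; a word `b a a b` is unreadable. -/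
private lemma aux_lemB (Γ : AGraph k) (a b : Fin k) (v d : Γ.V) (g : Γ.E) (ε : Bool)
    (hb : ∀ e, Γ.lab e = b → e = g)
    (hε : Γ.stepEnd (g, ε) = d)
    (had : ∀ e, Γ.lab e = a → Γ.o e = d → Γ.t e = v)
    (hstart : ∀ e, Γ.lab e = a → Γ.o e ≠ v) :
    ¬ Γ.Readable [(b, ε), (a, true), (a, true), (b, ε)] := by
  rintro ⟨l, hwalk, hlabel⟩
  rcases l with _ | ⟨s1, _ | ⟨s2, _ | ⟨s3, _ | ⟨s4, _ | ⟨s5, l⟩⟩⟩⟩⟩ <;>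
    simp [AGraph.walkLabel, Prod.ext_iff] at hlabel
  obtain ⟨⟨h1l, h1b⟩, ⟨h2l, h2b⟩, ⟨h3l, h3b⟩, h4l, h4b⟩ := hlabel
  simp [AGraph.IsWalk, List.Chain', List.isChain_cons_cons] at hwalk
  obtain ⟨h12, h23, h34⟩ := hwalk
  have hs1 : s1 = (g, ε) := by
    obtain ⟨e, bb⟩ := s1
    simp at h1l h1b
    rw [hb e h1l, h1b]
  rw [hs1, hε] at h12
  -- step 2 starts at d and is a forward a-edge
  have h2start : Γ.o s2.1 = d := by
    have : Γ.stepStart s2 = Γ.o s2.1 := by simp [AGraph.stepStart, h2b]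
    rw [← this, ← h12]
  have h2end : Γ.t s2.1 = v := had s2.1 h2l h2start
  have : Γ.stepEnd s2 = Γ.t s2.1 := by simp [AGraph.stepEnd, h2b]
  rw [this, h2end] at h23
  have h3start : Γ.o s3.1 = v := by
    have : Γ.stepStart s3 = Γ.o s3.1 := by simp [AGraph.stepStart, h3b]
    rw [← this, ← h23]
  exact hstart s3.1 h3l h3start

end Aux

theorem statement15 (k : ℕ) (Γ : AGraph k) (hcore : Γ.IsCore)
    (hrank : Γ.HasRank k)
    (hfold : ∃ Δ : AGraph k, AGraph.IsFold Γ Δ ∧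
      ∃ a : Fin k, AGraph.Iso Δ (AGraph.RAspike k a)) :
    ∃ w : FreeGroup (Fin k), w.toWord.length = 4 ∧ ¬ Γ.Readable w.toWord := by
  classical
  haveI := Γ.finV; haveI := Γ.finE
  obtain ⟨Δ, ⟨φ, e₁, e₂, hne12, hlab12, hVsurj, hEsurj, hEeq, hEfib, hfoldcase⟩,
    a, ψ, hψV, hψE⟩ := hfold
  haveI := Δ.finV; haveI := Δ.finE
  obtain ⟨hconn, hdeg⟩ := hcore
  -- composite morphism data
  set cV : Γ.V → Bool := fun x => ψ.onV (φ.onV x) with hcV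
  set cE : Γ.E → (Fin k ⊕ Unit) := fun e => ψ.onE (φ.onE e) with hcE
  have hRo : ∀ x, (AGraph.RAspike k a).o x = false := fun x => by cases x <;> rfl
  have hRt : ∀ bb, (AGraph.RAspike k a).t (Sum.inl bb) = false := fun _ => rfl
  have hcVo : ∀ e, cV (Γ.o e) = false := by
    intro e
    simp only [hcV]
    rw [← φ.map_o e, ← ψ.map_o]
    exact hRo _
  have hcVt : ∀ e, cV (Γ.t e) = (AGraph.RAspike k a).t (cE e) := by
    intro e
    simp only [hcV, hcE]
    rw [← φ.map_t e, ← ψ.map_t]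
  have hcElab : ∀ e, (AGraph.RAspike k a).lab (cE e) = Γ.lab e := by
    intro e
    simp only [hcE]
    rw [ψ.map_lab, φ.map_lab]
  have hcEfib : ∀ f f', cE f = cE f' →
      f = f' ∨ (f = e₁ ∧ f' = e₂) ∨ (f = e₂ ∧ f' = e₁) := by
    intro f f' h
    simp only [hcE] at h
    exact hEfib f f' (hψE.injective h)
  have hcEeq : cE e₁ = cE e₂ := by simp only [hcE]; rw [hEeq]
  have hsurjE : Function.Surjective cE := by
    intro z
    obtain ⟨y, hy⟩ := hψE.surjective z
    obtain ⟨x, hx⟩ := hEsurj y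
    exact ⟨x, by simp only [hcE]; rw [hx, hy]⟩
  have hsurjV : Function.Surjective cV := by
    intro z
    obtain ⟨y, hy⟩ := hψV.surjective z
    obtain ⟨x, hx⟩ := hVsurj y
    exact ⟨x, by simp only [hcV]; rw [hx, hy]⟩
  -- cardinalities
  have hcardE : Nat.card Γ.E = k + 2 := by
    have hb : Function.Bijective
        (fun e => if e = e₂ then (none : Option (Fin k ⊕ Unit)) else some (cE e)) := by
      constructor
      · intro x y hxy
        by_cases hx : x = e₂ <;> by_cases hy : y = e₂ <;> simp [hx, hy] at hxy
        · rw [hx, hy]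
        · rcases hcEfib x y hxy with h | ⟨h, h'⟩ | ⟨h, h'⟩
          · exact h
          · exact absurd h' hy
          · exact absurd h hx
      · intro z
        cases z with
        | none => exact ⟨e₂, by simp⟩
        | some g =>
          obtain ⟨e, he⟩ := hsurjE g
          by_cases h : e = e₂
          · refine ⟨e₁, ?_⟩
            show (if e₁ = e₂ then (none : Option (Fin k ⊕ Unit)) else some (cE e₁)) = some g
            rw [if_neg hne12, hcEeq, ← h, he]
          · refine ⟨e, ?_⟩
            show (if e = e₂ then (none : Option (Fin k ⊕ Unit)) else some (cE e)) = some g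
            rw [if_neg h, he]
    have h1 := Nat.card_eq_of_bijective _ hb
    have h2 : Nat.card (Option (Fin k ⊕ Unit)) = k + 2 := by
      rw [Nat.card_eq_fintype_card]
      simp
    omega
  have hcardV : Nat.card Γ.V = 3 := by
    have := hrank
    unfold AGraph.HasRank at this
    omega
  have hΔV : Nat.card Δ.V = 2 := by
    have h1 := Nat.card_eq_of_bijective _ hψV
    have h2 : Nat.card (AGraph.RAspike k a).V = 2 := by
      show Nat.card Bool = 2
      rw [Nat.card_eq_fintype_card]; simp
    omega
  have hφVni : ¬ Function.Injective φ.onV := by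
    intro hinj
    have := Nat.card_le_card_of_injective _ hinj
    omega
  -- the tip vertex
  obtain ⟨v, hv⟩ := hsurjV true
  have hvo : ∀ e, Γ.o e ≠ v := by
    intro e h
    have := hcVo e
    rw [h, hv] at this
    exact Bool.false_ne_true this.symm
  have hvt : ∀ e, Γ.t e = v → cE e = Sum.inr () := by
    intro e h
    have hh := hcVt e
    rw [h, hv] at hh
    rcases he : cE e with bb | u
    · rw [he] at hh
      rw [hRt bb] at hh
      exact absurd hh (by simp)
    · rfl
  haveI : Nontrivial Γ.V := by
    haveI := Fintype.ofFinite Γ.V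
    rw [Nat.card_eq_fintype_card] at hcardV
    exact Fintype.one_lt_card_iff_nontrivial.mp (by omega)
  obtain ⟨w', hw'⟩ := exists_ne v
  obtain ⟨e0, he0⟩ := aux_exists_edge_at Γ hconn (Ne.symm hw')
  have he0t : Γ.t e0 = v := he0.resolve_left (hvo e0)
  have he0E : cE e0 = Sum.inr () := hvt e0 he0t
  -- e₁ and e₂ map to the spike edge
  have hce₁ : cE e₁ = Sum.inr () := by
    by_contra hc
    refine hdeg v (aux_degree_one_t Γ v e0 hvo he0t ?_)
    intro e he
    have heE := hvt e he
    rcases hcEfib e e0 (heE.trans he0E.symm) with h | ⟨h, h'⟩ | ⟨h, h'⟩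
    · exact h
    · rw [h] at heE; exact absurd heE hc
    · rw [h] at heE
      rw [← hcEeq] at heE
      exact absurd heE hc
  have hce₂ : cE e₂ = Sum.inr () := hcEeq ▸ hce₁
  have hsub : ∀ e, Γ.t e = v → e = e₁ ∨ e = e₂ := by
    intro e he
    rcases hcEfib e e₁ ((hvt e he).trans hce₁.symm) with h | ⟨h, h'⟩ | ⟨h, h'⟩
    · exact Or.inl h
    · exact Or.inl h
    · exact Or.inr h
  have hte₁ : Γ.t e₁ = v := by
    by_contra hc
    have he0₂ : e0 = e₂ := (hsub e0 he0t).resolve_left (fun h => hc (h ▸ he0t))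
    refine hdeg v (aux_degree_one_t Γ v e₂ hvo (he0₂ ▸ he0t) ?_)
    intro e he
    exact (hsub e he).resolve_left (fun h => hc (h ▸ he))
  have hte₂ : Γ.t e₂ = v := by
    by_contra hc
    have he0₁ : e0 = e₁ := (hsub e0 he0t).resolve_right (fun h => hc (h ▸ he0t))
    refine hdeg v (aux_degree_one_t Γ v e₁ hvo (he0₁ ▸ he0t) ?_)
    intro e he
    exact (hsub e he).resolve_right (fun h => hc (h ▸ he))
  -- resolve the fold case: it must identify the origins
  have hVfib : ∀ x y, φ.onV x = φ.onV y →
      x = y ∨ (x = Γ.o e₁ ∧ y = Γ.o e₂) ∨ (x = Γ.o e₂ ∧ y = Γ.o e₁) := by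
    rcases hfoldcase with ⟨-, hfibA⟩ | ⟨-, hfibB⟩
    · exfalso
      apply hφVni
      intro x y h
      rcases hfibA x y h with h | ⟨h1, h2⟩ | ⟨h1, h2⟩
      · exact h
      · rw [h1, h2, hte₁, hte₂]
      · rw [h1, h2, hte₁, hte₂]
    · exact hfibB
  set p := Γ.o e₁ with hp
  set q := Γ.o e₂ with hq
  have hpq : p ≠ q := by
    obtain ⟨x, y, hxy, hne⟩ := Function.not_injective_iff.mp hφVni
    rcases hVfib x y hxy with h | ⟨h1, h2⟩ | ⟨h1, h2⟩
    · exact absurd h hne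
    · intro h; rw [← h1, ← h2] at h; exact hne h
    · intro h; rw [← h1, ← h2] at h; exact hne h.symm
  have hcVp : cV p = false := hcVo e₁
  have hcVq : cV q = false := hcVo e₂
  have hvp : v ≠ p := fun h => by rw [h, hcVp] at hv; exact Bool.false_ne_true hv
  have hvq : v ≠ q := fun h => by rw [h, hcVq] at hv; exact Bool.false_ne_true hv
  have hfalse : ∀ w, cV w = false → w = p ∨ w = q := by
    intro w hw
    have h' : cV w = cV p := hw.trans hcVp.symm
    simp only [hcV] at h'
    rcases hVfib w p (hψV.injective h') with h | ⟨h1, h2⟩ | ⟨h1, h2⟩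
    · exact Or.inl h
    · exact Or.inl h1
    · exact Or.inr h1
  -- labels
  have hlabe₁ : Γ.lab e₁ = a := by
    have h := hcElab e₁
    rw [hce₁] at h
    exact h.symm
  have hlabe₂ : Γ.lab e₂ = a := hlab12 ▸ hlabe₁
  -- edges other than e₁, e₂
  have hEclass : ∀ f, f ≠ e₁ → f ≠ e₂ → cE f = Sum.inl (Γ.lab f) := by
    intro f h1 h2
    rcases hf : cE f with bb | u
    · have h := hcElab f
      rw [hf] at h
      rw [show ((AGraph.RAspike k a).lab (Sum.inl bb)) = bb from rfl] at h
      rw [h]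
    · exfalso
      have hh : cE f = cE e₁ := by rw [hf, hce₁]
      rcases hcEfib f e₁ hh with h | ⟨h, h'⟩ | ⟨h, h'⟩
      · exact h1 h
      · exact h1 h
      · exact h2 h
  have hEnd : ∀ f, f ≠ e₁ → f ≠ e₂ → (Γ.o f = p ∨ Γ.o f = q) ∧ (Γ.t f = p ∨ Γ.t f = q) := by
    intro f h1 h2
    constructor
    · exact hfalse _ (hcVo f)
    · refine hfalse _ ?_
      rw [hcVt f, hEclass f h1 h2]
      exact hRt _
  have huniqf : ∀ f f', f ≠ e₁ → f ≠ e₂ → f' ≠ e₁ → f' ≠ e₂ → Γ.lab f = Γ.lab f' → f = f' := by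
    intro f f' h1 h2 h1' h2' hl
    have hh : cE f = cE f' := by rw [hEclass f h1 h2, hEclass f' h1' h2', hl]
    rcases hcEfib f f' hh with h | ⟨h, h'⟩ | ⟨h, h'⟩
    · exact h
    · exact absurd h h1
    · exact absurd h h2
  -- the extra a-edge
  obtain ⟨fa, hfa⟩ := hsurjE (Sum.inl a)
  have hfa1 : fa ≠ e₁ := fun h => by rw [h, hce₁] at hfa; exact Sum.inl_ne_inr hfa.symm
  have hfa2 : fa ≠ e₂ := fun h => by rw [h, hce₂] at hfa; exact Sum.inl_ne_inr hfa.symm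
  have hfaLab : Γ.lab fa = a := by
    have h := hcElab fa
    rw [hfa] at h
    exact h.symm
  have hfaEnd := hEnd fa hfa1 hfa2
  have huniq_a : ∀ e, Γ.lab e = a → e = e₁ ∨ e = e₂ ∨ e = fa := by
    intro e he
    by_cases h1 : e = e₁
    · exact Or.inl h1
    by_cases h2 : e = e₂
    · exact Or.inr (Or.inl h2)
    · exact Or.inr (Or.inr (huniqf e fa h1 h2 hfa1 hfa2 (he.trans hfaLab.symm)))
  have hstart : ∀ e, Γ.lab e = a → Γ.o e ≠ v := fun e _ => hvo e
  by_cases hcross : Γ.o fa ≠ Γ.t fa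
  · -- Case I : fa is not a loop; the word a^4 is unreadable
    refine ⟨FreeGroup.mk [(a, true), (a, true), (a, true), (a, true)], ?_, ?_⟩
    · rw [FreeGroup.toWord_mk]
      rw [show [((a : Fin k), true), (a, true), (a, true), (a, true)] =
          List.replicate 4 ((a, true) : Fin k × Bool) from rfl, FreeGroup.reduce_replicate]
      rfl
    · rw [FreeGroup.toWord_mk]
      rw [show [((a : Fin k), true), (a, true), (a, true), (a, true)] =
          List.replicate 4 ((a, true) : Fin k × Bool) from rfl, FreeGroup.reduce_replicate]
      rw [show List.replicate 4 ((a, true) : Fin k × Bool) =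
          [(a, true), (a, true), (a, true), (a, true)] from rfl]
      refine aux_lemA Γ a v fa hstart ?_ hcross
      intro e he hefa
      rcases huniq_a e he with h | h | h
      · rw [h]; exact hte₁
      · rw [h]; exact hte₂
      · exact absurd h hefa
  · -- Case II : fa is a loop at c ∈ {p, q}
    push_neg at hcross
    have main : ∀ (c d : Γ.V) (ed eo : Γ.E), Γ.o fa = c → c ≠ d → v ≠ d →
        Γ.o ed = d → Γ.t ed = v → Γ.o eo ≠ d → Γ.t eo ≠ d →
        ((ed = e₁ ∧ eo = e₂) ∨ (ed = e₂ ∧ eo = e₁)) →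
        ∃ w : FreeGroup (Fin k), w.toWord.length = 4 ∧ ¬ Γ.Readable w.toWord := by
      intro c d ed eo hofa hcd hvd hoed hted hoeo hteo hede
      have hted_ne : Γ.t ed ≠ d := by rw [hted]; exact hvd
      have hgex : ∃ g, g ≠ ed ∧ g ≠ eo ∧ (Γ.o g = d ∨ Γ.t g = d) := by
        by_contra hcon
        push_neg at hcon
        refine hdeg d (aux_degree_one_o Γ d ed ?_ hoed ?_)
        · intro e he
          by_cases h1 : e = ed
          · rw [h1] at he; exact hted_ne he
          by_cases h2 : e = eo
          · rw [h2] at he; exact hteo he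
          · exact (hcon e h1 h2).2 he
        · intro e he
          by_cases h1 : e = ed
          · exact h1
          by_cases h2 : e = eo
          · rw [h2] at he; exact absurd he hoeo
          · exact absurd he (hcon e h1 h2).1
      obtain ⟨g, hg1, hg2, hgd⟩ := hgex
      have hgne₁ : g ≠ e₁ := by
        rcases hede with ⟨h1, h2⟩ | ⟨h1, h2⟩
        · rw [← h1]; exact hg1
        · rw [← h2]; exact hg2
      have hgne₂ : g ≠ e₂ := by
        rcases hede with ⟨h1, h2⟩ | ⟨h1, h2⟩
        · rw [← h2]; exact hg2
        · rw [← h1]; exact hg1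
      set b := Γ.lab g with hb
      have htfa : Γ.t fa = c := by rw [← hcross]; exact hofa
      have hba : b ≠ a := by
        intro hcontra
        have hgfa : g = fa := huniqf g fa hgne₁ hgne₂ hfa1 hfa2 (by rw [← hb, hcontra, hfaLab])
        rw [hgfa] at hgd
        rcases hgd with h | h
        · exact hcd (hofa.symm.trans h)
        · exact hcd (htfa.symm.trans h)
      have huniq_b : ∀ e, Γ.lab e = b → e = g := by
        intro e he
        by_cases h1 : e = e₁
        · rw [h1, hlabe₁] at he; exact absurd he.symm hba
        by_cases h2 : e = e₂
        · rw [h2, hlabe₂] at he; exact absurd he.symm hba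
        · exact huniqf e g h1 h2 hgne₁ hgne₂ he
      obtain ⟨ε, hε⟩ : ∃ ε : Bool, Γ.stepEnd (g, ε) = d := by
        rcases hgd with h | h
        · exact ⟨false, by simp [AGraph.stepEnd, h]⟩
        · exact ⟨true, by simp [AGraph.stepEnd, h]⟩
      have had : ∀ e, Γ.lab e = a → Γ.o e = d → Γ.t e = v := by
        intro e he hoe
        rcases huniq_a e he with h | h | h
        · rw [h]; exact hte₁
        · rw [h]; exact hte₂
        · rw [h] at hoe
          rw [hofa] at hoe
          exact absurd hoe hcd
      refine ⟨FreeGroup.mk [(b, ε), (a, true), (a, true), (b, ε)], ?_, ?_⟩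
      · rw [FreeGroup.toWord_mk]
        simp [FreeGroup.reduce, hba, Ne.symm hba]
      · rw [FreeGroup.toWord_mk]
        have hred : FreeGroup.reduce [(b, ε), (a, true), (a, true), (b, ε)] =
            [(b, ε), (a, true), (a, true), (b, ε)] := by
          simp [FreeGroup.reduce, hba, Ne.symm hba]
        rw [hred]
        exact aux_lemB Γ a b v d g ε huniq_b hε had hstart
    rcases hfaEnd.1 with hc | hc
    · -- fa is a loop at p : take d = q
      refine main p q e₂ e₁ hc hpq hvq rfl hte₂ (fun h => hpq h) ?_ (Or.inr ⟨rfl, rfl⟩)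
      rw [hte₁]; exact hvq
    · -- fa is a loop at q : take d = p
      refine main q p e₁ e₂ hc (Ne.symm hpq) hvp rfl hte₁ (fun h => hpq h.symm) ?_
        (Or.inl ⟨rfl, rfl⟩)
      rw [hte₂]; exact hvp
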